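/- For μ > 0, σ > 0, M > 0, and α ≥ 0, the value η(α) = α/M + ((1 − Mμ) + √(2αMσ² + (1−Mμ)²))/(M²σ²) satisfies the equation M·η(α) = α + (√(2η(α)σ² + μ²) − μ)/σ², and η is nonnegative and increasing in α. -/

import Mathlib

open Real Set

/-- The exponent `η(α)` of the first passage time to a lower level under release rate `M`. -/
noncomputable def etaExp (μ σ M α : ℝ) : ℝ :=
  α / M + ((1 - M * μ) + Real.sqrt (2 * α * M * σ ^ 2 + (1 - M * μ) ^ 2)) / (M ^ 2 * σ ^ 2)

theorem etaExp_solves_equation_nonneg_increasing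
    (μ σ M : ℝ) (hμ : 0 < μ) (hσ : 0 < σ) (hM : 0 < M) :
    (∀ α : ℝ, 0 ≤ α →
        M * etaExp μ σ M α
          = α + (Real.sqrt (2 * etaExp μ σ M α * σ ^ 2 + μ ^ 2) - μ) / σ ^ 2) ∧
      (∀ α : ℝ, 0 ≤ α → 0 ≤ etaExp μ σ M α) ∧
      StrictMonoOn (etaExp μ σ M) (Set.Ici 0) := by
  have hσ2 : (0:ℝ) < σ ^ 2 := by positivity
  have hM2 : (0:ℝ) < M ^ 2 * σ ^ 2 := by positivity
  refine ⟨?_, ?_, ?_⟩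
  · intro α hα
    have hD : (0:ℝ) ≤ 2 * α * M * σ ^ 2 + (1 - M * μ) ^ 2 := by positivity
    set s := Real.sqrt (2 * α * M * σ ^ 2 + (1 - M * μ) ^ 2) with hs
    have hs0 : 0 ≤ s := Real.sqrt_nonneg _
    have hs2 : s ^ 2 = 2 * α * M * σ ^ 2 + (1 - M * μ) ^ 2 := Real.sq_sqrt hD
    have hkey : 2 * etaExp μ σ M α * σ ^ 2 + μ ^ 2 = ((1 + s) / M) ^ 2 := by
      rw [etaExp, ← hs]
      field_simp
      linear_combination (-1) * hs2
    rw [hkey, Real.sqrt_sq (by positivity)]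
    rw [etaExp, ← hs]
    field_simp
    ring
  · intro α hα
    have hD : (1 - M * μ) ^ 2 ≤ 2 * α * M * σ ^ 2 + (1 - M * μ) ^ 2 := by nlinarith
    have h1 : -(1 - M * μ) ≤ Real.sqrt (2 * α * M * σ ^ 2 + (1 - M * μ) ^ 2) := by
      calc -(1 - M * μ) ≤ |1 - M * μ| := neg_le_abs _
        _ = Real.sqrt ((1 - M * μ) ^ 2) := (Real.sqrt_sq_eq_abs _).symm
        _ ≤ _ := Real.sqrt_le_sqrt hD
    have := div_nonneg (by linarith : (0:ℝ) ≤ (1 - M * μ) + Real.sqrt (2 * α * M * σ ^ 2 + (1 - M * μ) ^ 2)) hM2.le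
    have := div_nonneg hα hM.le
    rw [etaExp]; linarith
  · intro a ha b hb hab
    have hDa : (0:ℝ) ≤ 2 * a * M * σ ^ 2 + (1 - M * μ) ^ 2 := by
      simp only [mem_Ici] at ha; positivity
    have hsq : Real.sqrt (2 * a * M * σ ^ 2 + (1 - M * μ) ^ 2)
        < Real.sqrt (2 * b * M * σ ^ 2 + (1 - M * μ) ^ 2) :=
      Real.sqrt_lt_sqrt hDa (by nlinarith)
    have h1 : a / M < b / M := by gcongr
    rw [etaExp, etaExp]
    have h2 : (1 - M * μ + Real.sqrt (2 * a * M * σ ^ 2 + (1 - M * μ) ^ 2)) / (M ^ 2 * σ ^ 2)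
        < (1 - M * μ + Real.sqrt (2 * b * M * σ ^ 2 + (1 - M * μ) ^ 2)) / (M ^ 2 * σ ^ 2) := by
      gcongr
    linarith
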